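/- For every m×n matrix D over 𝔽₂ there exists an invertible upper-triangular n×n matrix V over 𝔽₂ such that D·V is reduced. (Correctness of the standard left-to-right reduction algorithm: a sequence of valid column operations brings any matrix to reduced form.) -/

import Mathlib

open Matrix

/-- The `low` of column `j` of `R`: the largest row index `i` with `R i j ≠ 0`,
or `⊥` if the column is zero. -/
def low {m n : ℕ} (R : Matrix (Fin m) (Fin n) (ZMod 2)) (j : Fin n) : WithBot (Fin m) :=
  (Finset.univ.filter fun i => R i j ≠ 0).max

/-- `R` is reduced if no two distinct nonzero columns have equal lows. -/
def Reduced {m n : ℕ} (R : Matrix (Fin m) (Fin n) (ZMod 2)) : Prop :=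
  ∀ j₁ j₂ : Fin n, low R j₁ ≠ ⊥ → low R j₁ = low R j₂ → j₁ = j₂

/-- A square matrix is upper triangular if `V i j = 0` whenever `i > j`. -/
def UpperTri {k : ℕ} (V : Matrix (Fin k) (Fin k) (ZMod 2)) : Prop :=
  ∀ i j : Fin k, j < i → V i j = 0

namespace StmtAux

/-- Measure of a single low value. -/
def fm {m : ℕ} : WithBot (Fin m) → ℕ
  | ⊥ => 0
  | (i : Fin m) => i.val + 1

lemma fm_lt_fm {m : ℕ} {a b : WithBot (Fin m)} (h : a < b) : fm a < fm b := by
  cases a with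
  | bot => cases b with
    | bot => exact absurd h (lt_irrefl _)
    | coe b => simp [fm]
  | coe a => cases b with
    | bot => exact absurd h (by simp)
    | coe b =>
      have : a < b := by exact_mod_cast h
      simpa [fm] using this

/-- Total measure: sum of lows. -/
def mu {m n : ℕ} (R : Matrix (Fin m) (Fin n) (ZMod 2)) : ℕ :=
  ∑ j : Fin n, fm (low R j)

lemma mem_of_low {m n : ℕ} {R : Matrix (Fin m) (Fin n) (ZMod 2)} {j : Fin n} {ℓ : Fin m}
    (h : low R j = (ℓ : WithBot (Fin m))) : R ℓ j ≠ 0 := by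
  have := Finset.mem_of_max h
  simpa using this

lemma eq_zero_of_low_lt {m n : ℕ} {R : Matrix (Fin m) (Fin n) (ZMod 2)} {j : Fin n} {i : Fin m}
    (h : low R j < (i : WithBot (Fin m))) : R i j = 0 := by
  by_contra hne
  have hmem : i ∈ Finset.univ.filter fun i => R i j ≠ 0 := by simpa using hne
  exact absurd (Finset.le_max hmem) (not_le_of_gt h)

lemma low_lt_of_forall {m n : ℕ} {R : Matrix (Fin m) (Fin n) (ZMod 2)} {j : Fin n} {ℓ : Fin m}
    (h : ∀ i : Fin m, R i j ≠ 0 → i < ℓ) : low R j < (ℓ : WithBot (Fin m)) := by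
  rcases hl : low R j with _ | ℓ'
  · exact WithBot.bot_lt_coe _
  · exact WithBot.coe_lt_coe.mpr (h ℓ' (mem_of_low hl))

lemma upperTri_mul {k : ℕ} {A B : Matrix (Fin k) (Fin k) (ZMod 2)}
    (hA : UpperTri A) (hB : UpperTri B) : UpperTri (A * B) := by
  intro i j hji
  rw [Matrix.mul_apply]
  refine Finset.sum_eq_zero fun x _ => ?_
  by_cases hx : x < i
  · rw [hA i x hx, zero_mul]
  · rw [hB x j (lt_of_lt_of_le hji (le_of_not_gt hx)), mul_zero]

lemma zmod2_ne_zero {a : ZMod 2} (h : a ≠ 0) : a = 1 := by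
  revert h; revert a; decide

end StmtAux

open StmtAux in
/-- every matrix can be brought to reduced form by valid column operations. -/
theorem stmt_2 {m n : ℕ} (D : Matrix (Fin m) (Fin n) (ZMod 2)) :
    ∃ V : Matrix (Fin n) (Fin n) (ZMod 2), IsUnit V ∧ UpperTri V ∧ Reduced (D * V) := by
  suffices H : ∀ N : ℕ, ∀ D : Matrix (Fin m) (Fin n) (ZMod 2), mu D ≤ N →
      ∃ V : Matrix (Fin n) (Fin n) (ZMod 2), IsUnit V ∧ UpperTri V ∧ Reduced (D * V) by
    exact H (mu D) D le_rfl
  intro N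
  induction N with
  | zero =>
    intro D hD
    refine ⟨1, isUnit_one, fun i j h => by
      simp [Matrix.one_apply, (Fin.ne_of_lt h).symm], ?_⟩
    rw [Matrix.mul_one]
    intro j₁ j₂ h₁ _
    exfalso
    apply h₁
    have hz : fm (low D j₁) = 0 := by
      have := Finset.sum_eq_zero_iff.mp (Nat.le_zero.mp hD) j₁ (Finset.mem_univ _)
      exact this
    rcases h : low D j₁ with _ | ℓ
    · rfl
    · rw [h] at hz; simp [fm] at hz
  | succ N ih =>
    intro D hD
    by_cases hred : Reduced D
    · exact ⟨1, isUnit_one, fun i j h => by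
        simp [Matrix.one_apply, (Fin.ne_of_lt h).symm], by rwa [Matrix.mul_one]⟩
    · rw [Reduced] at hred
      push_neg at hred
      obtain ⟨a, b, hne, heq, hab⟩ := hred
      -- WLOG j₁ < j₂ with low D j₁ = low D j₂ ≠ ⊥
      obtain ⟨j₁, j₂, hlt, hbot, heq'⟩ :
          ∃ j₁ j₂ : Fin n, j₁ < j₂ ∧ low D j₁ ≠ ⊥ ∧ low D j₁ = low D j₂ := by
        rcases lt_or_gt_of_ne hab with h | h
        · exact ⟨a, b, h, hne, heq⟩
        · exact ⟨b, a, h, heq ▸ hne, heq.symm⟩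
      obtain ⟨ℓ, hℓ⟩ : ∃ ℓ : Fin m, low D j₁ = (ℓ : WithBot (Fin m)) := by
        rcases h : low D j₁ with _ | ℓ
        · exact absurd h hbot
        · exact ⟨ℓ, rfl⟩
      set E : Matrix (Fin n) (Fin n) (ZMod 2) :=
        1 + Matrix.single j₁ j₂ 1 with hE
      have hneq : j₁ ≠ j₂ := Fin.ne_of_lt hlt
      have hEsq : E * E = 1 := by
        rw [hE, add_mul, mul_add, mul_add, Matrix.one_mul, Matrix.mul_one,
          Matrix.single_mul_single_of_ne (h := hneq.symm)]
        have h2 : Matrix.single j₁ j₂ (1 : ZMod 2)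
            + Matrix.single j₁ j₂ (1 : ZMod 2) = 0 := by
          ext i j
          simp only [Matrix.add_apply, Matrix.zero_apply]
          have : ∀ a : ZMod 2, a + a = 0 := by decide
          exact this _
        rw [Matrix.one_mul, add_zero, add_assoc, h2, add_zero]
      have hEunit : IsUnit E := ⟨⟨E, E, hEsq, hEsq⟩, rfl⟩
      have hEtri : UpperTri E := by
        intro i j hji
        rw [hE]
        simp only [Matrix.add_apply, Matrix.one_apply, Matrix.single, Matrix.of_apply]
        rw [if_neg (Fin.ne_of_gt hji), if_neg, add_zero]
        rintro ⟨rfl, rfl⟩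
        exact absurd hlt (lt_asymm hji)
      set R : Matrix (Fin m) (Fin n) (ZMod 2) := D * E with hR
      -- entries of R
      have hRapp : ∀ i j, R i j = D i j + (if j = j₂ then D i j₁ else 0) := by
        intro i j
        rw [hR, hE, Matrix.mul_add, Matrix.mul_one, Matrix.add_apply]
        congr 1
        rw [Matrix.mul_apply]
        by_cases hj : j = j₂
        · subst hj
          rw [if_pos rfl]
          rw [Finset.sum_eq_single j₁]
          · simp [Matrix.single]
          · intro b _ hb
            simp [Matrix.single, hb.symm]
          · simp
        · rw [if_neg hj]
          refine Finset.sum_eq_zero fun x _ => ?_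
          simp [Matrix.single, Ne.symm hj]
      -- columns other than j₂ unchanged
      have hlow_eq : ∀ j : Fin n, j ≠ j₂ → low R j = low D j := by
        intro j hj
        unfold low
        congr 1
        ext i
        simp [hRapp i j, hj]
      -- column j₂ strictly decreases
      have hℓ2 : low D j₂ = (ℓ : WithBot (Fin m)) := heq'.symm.trans hℓ
      have hdec : low R j₂ < low D j₂ := by
        rw [hℓ2]
        apply low_lt_of_forall
        intro i hi
        rw [hRapp i j₂, if_pos rfl] at hi
        rcases lt_trichotomy i ℓ with h | h | h
        · exact h
        · exfalso
          subst h
          have h1 : D i j₂ = 1 := zmod2_ne_zero (mem_of_low hℓ2)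
          have h2 : D i j₁ = 1 := zmod2_ne_zero (mem_of_low hℓ)
          rw [h1, h2] at hi
          exact hi (by decide)
        · exfalso
          have h1 : D i j₂ = 0 := eq_zero_of_low_lt (by rw [hℓ2]; exact_mod_cast h)
          have h2 : D i j₁ = 0 := eq_zero_of_low_lt (by rw [hℓ]; exact_mod_cast h)
          rw [h1, h2] at hi
          exact hi (by norm_num)
      have hmu : mu R < mu D := by
        apply Finset.sum_lt_sum
        · intro j _
          by_cases hj : j = j₂
          · subst hj; exact le_of_lt (fm_lt_fm hdec)
          · rw [hlow_eq j hj]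
        · exact ⟨j₂, Finset.mem_univ _, fm_lt_fm hdec⟩
      obtain ⟨V', hV'unit, hV'tri, hV'red⟩ := ih R (by omega)
      refine ⟨E * V', hEunit.mul hV'unit, upperTri_mul hEtri hV'tri, ?_⟩
      rwa [← Matrix.mul_assoc]
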